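/- Let 1 ≤ p < ∞, let d ≥ 1, and set φ_d(z) = (z_1 + z_2 + ⋯ + z_d)/√d. Then ‖φ_d‖_{(H^p)*} = ‖φ_d‖_{L^p(𝕋^∞)}^{-1}; that is, the supremum of |⟨f, φ_d⟩_{L²(𝕋^∞)}| / ‖f‖_{L^p(𝕋^∞)} over nonzero analytic polynomials f equals the reciprocal of the L^p(𝕋^∞) norm of φ_d. -/

import Mathlib

open MeasureTheory Complex Filter
open scoped ENNReal NNReal

set_option maxHeartbeats 1000000

noncomputable instance : MeasurableSpace Circle := borel Circle
instance : BorelSpace Circle := ⟨rfl⟩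

/-- The countably infinite polytorus `𝕋^∞`. -/
abbrev Polytorus : Type := ℕ → Circle

/-- The Haar probability measure on a nonempty compact group. -/
noncomputable def haarP (G : Type*) [Group G] [TopologicalSpace G] [IsTopologicalGroup G]
    [CompactSpace G] [Nonempty G] [MeasurableSpace G] [BorelSpace G] : Measure G :=
  Measure.haarMeasure ⊤

/-- The Haar probability measure `μ_∞` on `𝕋^∞`, i.e. the countable product of normalized
Lebesgue arc measures. -/
noncomputable def muInf : Measure Polytorus := haarP Polytorus

instance : IsProbabilityMeasure muInf :=
  ⟨by simpa [muInf, haarP] using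
    Measure.haarMeasure_self (K₀ := (⊤ : TopologicalSpace.PositiveCompacts Polytorus))⟩

/-- The analytic monomial `z ^ α` for a finitely supported multi-index `α`. -/
def monomial (α : ℕ →₀ ℕ) : Polytorus → ℂ := fun z => α.prod fun j n => (z j : ℂ) ^ n

/-- Analytic polynomials on `𝕋^∞`: finite linear combinations of analytic monomials. -/
def IsAnalyticPoly (f : Polytorus → ℂ) : Prop :=
  f ∈ Submodule.span ℂ (Set.range monomial)

/-- The `L^p(𝕋^∞)` norm, for finite exponent `p`. -/
noncomputable def lpNorm (p : ℝ) (f : Polytorus → ℂ) : ℝ :=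
  (∫ z, ‖f z‖ ^ p ∂muInf) ^ (1 / p)

/-- The `L²(𝕋^∞)` pairing `⟨f, g⟩ = ∫ f conj(g) dμ_∞`. -/
noncomputable def pairing (f g : Polytorus → ℂ) : ℂ :=
  ∫ z, f z * (starRingEnd ℂ) (g z) ∂muInf

/-- The dual Hardy norm `‖φ‖_{(H^p)^*}`, the supremum of `|⟨f, φ⟩|/‖f‖_{L^p}` over all
nonzero analytic polynomials `f`. -/
noncomputable def dualNorm (p : ℝ) (φ : Polytorus → ℂ) : ℝ :=
  sSup {t : ℝ | ∃ f : Polytorus → ℂ, IsAnalyticPoly f ∧ f ≠ 0 ∧ t = ‖pairing f φ‖ / lpNorm p f}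

/-- The function `φ_d(z) = (z_1 + ⋯ + z_d)/√d` on `𝕋^∞`. -/
noncomputable def phiFn (d : ℕ) : Polytorus → ℂ :=
  fun z => (∑ j ∈ Finset.range d, (z j : ℂ)) / (Real.sqrt d : ℂ)

section Aux

instance : muInf.IsHaarMeasure := by unfold muInf haarP; infer_instance

lemma continuous_permMap (π : Equiv.Perm ℕ) : Continuous (fun z : Polytorus => z ∘ π) :=
  continuous_pi fun j => continuous_apply (π j)

lemma measurePreserving_permMap (π : Equiv.Perm ℕ) :
    MeasurePreserving (fun z : Polytorus => z ∘ π) muInf muInf := by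
  have hc : Continuous (fun z : Polytorus => z ∘ π) := continuous_permMap π
  have hm : Measurable (fun z : Polytorus => z ∘ π) := hc.measurable
  refine ⟨hm, ?_⟩
  set μ' := muInf.map (fun z : Polytorus => z ∘ π) with hμ'
  have hsurj : Function.Surjective (fun z : Polytorus => z ∘ π) := by
    intro w; exact ⟨w ∘ π.symm, by funext j; simp⟩
  haveI : μ'.IsMulLeftInvariant :=
    MeasureTheory.isMulLeftInvariant_map (⟨fun z : Polytorus => z ∘ π, fun a b => rfl⟩ : Polytorus →ₙ* Polytorus) hm hsurj
  haveI : IsProbabilityMeasure μ' := Measure.isProbabilityMeasure_map hm.aemeasurable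
  have h1 := Measure.haarMeasure_unique μ' (⊤ : TopologicalSpace.PositiveCompacts Polytorus)
  have h2 := Measure.haarMeasure_unique muInf (⊤ : TopologicalSpace.PositiveCompacts Polytorus)
  have e1 : μ' (⊤ : TopologicalSpace.PositiveCompacts Polytorus) = 1 := by
    simpa using measure_univ (μ := μ')
  have e2 : muInf (⊤ : TopologicalSpace.PositiveCompacts Polytorus) = 1 := by
    simpa using measure_univ (μ := muInf)
  rw [h1, e1, one_smul]
  conv_rhs => rw [h2, e2, one_smul]

lemma continuous_coe_apply (j : ℕ) : Continuous (fun z : Polytorus => (z j : ℂ)) :=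
  continuous_subtype_val.comp (continuous_apply j)

lemma monomial_continuous (α : ℕ →₀ ℕ) : Continuous (monomial α) := by
  unfold monomial Finsupp.prod
  exact continuous_finset_prod _ fun j _ => (continuous_coe_apply j).pow _

lemma Continuous.integrableM {E : Type*} [NormedAddCommGroup E] {f : Polytorus → E}
    (hf : Continuous f) : Integrable f muInf :=
  hf.integrable_of_hasCompactSupport
    (IsCompact.of_isClosed_subset isCompact_univ (isClosed_tsupport f) (Set.subset_univ _))

lemma monomial_mul (α : ℕ →₀ ℕ) (x y : Polytorus) :
    monomial α (x * y) = monomial α x * monomial α y := by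
  unfold monomial Finsupp.prod
  rw [← Finset.prod_mul_distrib]
  exact Finset.prod_congr rfl fun j _ => by simp [Pi.mul_apply, mul_pow]

lemma monomial_delta (u : Circle) (j : ℕ) (α : ℕ →₀ ℕ) :
    monomial α (fun i => if i = j then u else 1) = (u : ℂ) ^ (α j) := by
  have h : monomial α (fun i => if i = j then u else 1)
      = α.prod fun i n => if i = j then (u : ℂ) ^ n else 1 := by
    unfold monomial Finsupp.prod
    refine Finset.prod_congr rfl fun i _ => ?_
    by_cases h : i = j <;> simp [h]
  rw [h, Finsupp.prod_ite_eq']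
  split_ifs with h
  · rfl
  · rw [Finsupp.notMem_support_iff.mp h, pow_zero]

lemma integral_monomial_mul_conj (α β : ℕ →₀ ℕ) :
    (∫ z, monomial α z * (starRingEnd ℂ) (monomial β z) ∂muInf) = if α = β then 1 else 0 := by
  split_ifs with h
  · subst h
    have h1 : ∀ z : Polytorus, monomial α z * (starRingEnd ℂ) (monomial α z) = 1 := by
      intro z
      rw [Complex.mul_conj]
      norm_cast
      unfold monomial Finsupp.prod
      rw [map_prod]
      refine Finset.prod_eq_one fun j _ => ?_
      rw [map_pow, Complex.normSq_eq_norm_sq, Circle.norm_coe, one_pow, one_pow]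
    simp only [h1]
    simp
  · obtain ⟨j, hj⟩ : ∃ j, α j ≠ β j := by
      by_contra h'; push_neg at h'; exact h (Finsupp.ext h')
    set n : ℤ := (α j : ℤ) - (β j : ℤ) with hn
    have hn0 : n ≠ 0 := by
      simp only [hn, sub_ne_zero]
      exact_mod_cast hj
    set u : Circle := Circle.exp (Real.pi / n) with hu
    set c : Polytorus := fun i => if i = j then u else 1 with hc
    set e : ℂ := (u : ℂ) ^ (α j) * (starRingEnd ℂ) ((u : ℂ) ^ (β j)) with he
    have key : ∀ z : Polytorus, monomial α (c * z) * (starRingEnd ℂ) (monomial β (c * z))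
        = e * (monomial α z * (starRingEnd ℂ) (monomial β z)) := by
      intro z
      rw [monomial_mul, monomial_mul, map_mul, hc, monomial_delta, monomial_delta, he]
      ring
    have inv := MeasureTheory.integral_mul_left_eq_self (μ := muInf)
      (fun z => monomial α z * (starRingEnd ℂ) (monomial β z)) c
    simp only [key] at inv
    rw [show (fun z : Polytorus => e * (monomial α z * (starRingEnd ℂ) (monomial β z)))
        = fun z => e • (monomial α z * (starRingEnd ℂ) (monomial β z)) from rfl,
      integral_smul] at inv
    have hnC : (n : ℂ) ≠ 0 := by exact_mod_cast hn0
    have hecoe : (u : ℂ) = Complex.exp (((Real.pi / n : ℝ) : ℂ) * Complex.I) := Circle.coe_exp _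
    have hconj : (starRingEnd ℂ) ((u : ℂ) ^ (β j)) = ((u : ℂ))⁻¹ ^ (β j) := by
      rw [map_pow, ← Circle.coe_inv_eq_conj, Circle.coe_inv]
    have hzpow : e = (u : ℂ) ^ n := by
      rw [he, hconj, hn]
      rw [zpow_sub₀ (by simp [hecoe, Complex.exp_ne_zero])]
      rw [zpow_natCast, zpow_natCast, inv_pow]
      ring
    have hem1 : e = -1 := by
      rw [hzpow, hecoe, ← Complex.exp_int_mul]
      rw [show ((n : ℂ) * (((Real.pi / n : ℝ) : ℂ) * Complex.I)) = (Real.pi : ℂ) * Complex.I by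
        push_cast
        field_simp]
      exact Complex.exp_pi_mul_I
    rw [hem1] at inv
    have : (2 : ℂ) • (∫ z, monomial α z * (starRingEnd ℂ) (monomial β z) ∂muInf) = 0 := by
      rw [two_smul]
      nth_rewrite 1 [← inv]
      simp
    simpa using this

lemma monomial_single (j : ℕ) : monomial (Finsupp.single j 1) = fun z : Polytorus => (z j : ℂ) := by
  funext z; simp [monomial, Finsupp.prod_single_index]

lemma pairing_monomial (α β : ℕ →₀ ℕ) :
    pairing (monomial α) (monomial β) = if α = β then 1 else 0 :=
  integral_monomial_mul_conj α β

lemma continuous_phiFn (d : ℕ) : Continuous (phiFn d) := by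
  unfold phiFn
  exact (continuous_finset_sum _ fun j _ => continuous_coe_apply j).div_const _

lemma pairing_phiFn {f : Polytorus → ℂ} (hf : Continuous f) (d : ℕ) :
    pairing f (phiFn d)
      = ((Real.sqrt d : ℝ) : ℂ)⁻¹ * ∑ j ∈ Finset.range d, pairing f (monomial (Finsupp.single j 1)) := by
  unfold pairing phiFn
  have h1 : ∀ z : Polytorus,
      f z * (starRingEnd ℂ) ((∑ j ∈ Finset.range d, (z j : ℂ)) / ((Real.sqrt d : ℝ) : ℂ))
      = ((Real.sqrt d : ℝ) : ℂ)⁻¹ * ∑ j ∈ Finset.range d, f z * (starRingEnd ℂ) ((z j : ℂ)) := by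
    intro z
    rw [map_div₀, map_sum, Complex.conj_ofReal, ← Finset.mul_sum, div_eq_mul_inv]
    ring
  simp_rw [h1]
  rw [integral_const_mul, integral_finset_sum]
  · congr 1
    refine Finset.sum_congr rfl fun j _ => ?_
    rw [monomial_single]
  · intro j _
    exact (hf.mul (Complex.continuous_conj.comp (continuous_coe_apply j))).integrableM

lemma pairing_sum {ι : Type*} (s : Finset ι) (c : ι → ℂ) (F : ι → Polytorus → ℂ)
    (hF : ∀ i ∈ s, Continuous (F i)) {g : Polytorus → ℂ} (hg : Continuous g) :
    pairing (∑ i ∈ s, c i • F i) g = ∑ i ∈ s, c i * pairing (F i) g := by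
  unfold pairing
  have h1 : ∀ z : Polytorus,
      (∑ i ∈ s, c i • F i) z * (starRingEnd ℂ) (g z)
      = ∑ i ∈ s, c i * (F i z * (starRingEnd ℂ) (g z)) := by
    intro z
    rw [Finset.sum_apply, Finset.sum_mul]
    exact Finset.sum_congr rfl fun i _ => by simp [mul_assoc]
  simp_rw [h1]
  rw [integral_finset_sum]
  · exact Finset.sum_congr rfl fun i hi => integral_const_mul _ _
  · intro i hi
    exact (((hF i hi).mul (Complex.continuous_conj.comp hg))).integrableM.const_mul _

lemma phiFn_eq_sum (d : ℕ) :
    phiFn d = ∑ j ∈ Finset.range d, ((Real.sqrt d : ℝ) : ℂ)⁻¹ • monomial (Finsupp.single j 1) := by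
  funext z
  simp only [phiFn, Finset.sum_apply, Pi.smul_apply, monomial_single, smul_eq_mul,
    div_eq_mul_inv, ← Finset.sum_mul]
  rw [Finset.sum_mul]
  exact Finset.sum_congr rfl fun j _ => mul_comm _ _

lemma sqrt_d_sq (d : ℕ) (hd : 1 ≤ d) :
    ((Real.sqrt d : ℝ) : ℂ) * ((Real.sqrt d : ℝ) : ℂ) = (d : ℂ) := by
  norm_cast
  exact Real.mul_self_sqrt (by positivity)

lemma sqrt_d_ne (d : ℕ) (hd : 1 ≤ d) : ((Real.sqrt d : ℝ) : ℂ) ≠ 0 := by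
  simp only [ne_eq, Complex.ofReal_eq_zero]
  rw [← ne_eq, Real.sqrt_ne_zero']
  exact_mod_cast hd

lemma pairing_monomial_single_phiFn (d : ℕ) (j : ℕ) (hj : j < d) :
    pairing (monomial (Finsupp.single j 1)) (phiFn d) = ((Real.sqrt d : ℝ) : ℂ)⁻¹ := by
  rw [pairing_phiFn (monomial_continuous _)]
  have h1 : ∀ i ∈ Finset.range d,
      pairing (monomial (Finsupp.single j 1)) (monomial (Finsupp.single i 1))
      = if i = j then 1 else 0 := by
    intro i _
    rw [pairing_monomial]
    congr 1
    simp only [eq_iff_iff]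
    constructor
    · intro h
      exact (Finsupp.single_left_inj one_ne_zero).mp h.symm
    · intro h; rw [h]
  rw [Finset.sum_congr rfl h1, Finset.sum_ite_eq' (Finset.range d) j (fun _ => (1 : ℂ))]
  simp [Finset.mem_range.mpr hj]

lemma pairing_phiFn_self (d : ℕ) (hd : 1 ≤ d) : pairing (phiFn d) (phiFn d) = 1 := by
  have h := pairing_sum (Finset.range d) (fun _ => ((Real.sqrt d : ℝ) : ℂ)⁻¹)
    (fun j => monomial (Finsupp.single j 1)) (fun j _ => monomial_continuous _)
    (continuous_phiFn d)
  rw [← phiFn_eq_sum] at h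
  rw [h]
  have h2 : ∀ j ∈ Finset.range d,
      ((Real.sqrt d : ℝ) : ℂ)⁻¹ * pairing (monomial (Finsupp.single j 1)) (phiFn d)
      = ((Real.sqrt d : ℝ) : ℂ)⁻¹ * ((Real.sqrt d : ℝ) : ℂ)⁻¹ := by
    intro j hj
    rw [pairing_monomial_single_phiFn d j (Finset.mem_range.mp hj)]
  rw [Finset.sum_congr rfl h2, Finset.sum_const, Finset.card_range, nsmul_eq_mul,
    ← mul_inv]
  rw [sqrt_d_sq d hd]
  have hdc : (d : ℂ) ≠ 0 := by
    simp only [ne_eq, Nat.cast_eq_zero]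
    omega
  exact mul_inv_cancel₀ hdc

lemma memLp_of_continuous {f : Polytorus → ℂ} (hf : Continuous f) (q : ℝ≥0∞) :
    MemLp f q muInf := by
  obtain ⟨z₀, -, hz₀⟩ := isCompact_univ.exists_isMaxOn (Set.univ_nonempty) hf.norm.continuousOn
  exact (memLp_top_of_bound hf.aestronglyMeasurable _
    (Filter.Eventually.of_forall fun z => hz₀ (Set.mem_univ z))).mono_exponent le_top

lemma lpNorm_eq_toReal {p : ℝ} (hp : 1 ≤ p) {f : Polytorus → ℂ} (hf : Continuous f) :
    lpNorm p f = (eLpNorm f (ENNReal.ofReal p) muInf).toReal := by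
  have hp0 : 0 < p := lt_of_lt_of_le one_pos hp
  rw [(memLp_of_continuous hf _).eLpNorm_eq_integral_rpow_norm
      (by simp [ENNReal.ofReal_eq_zero]; linarith) ENNReal.ofReal_ne_top]
  rw [ENNReal.toReal_ofReal (by
    apply Real.rpow_nonneg
    exact integral_nonneg fun z => Real.rpow_nonneg (norm_nonneg _) _)]
  rw [ENNReal.toReal_ofReal hp0.le]
  unfold _root_.lpNorm
  rw [one_div]

lemma lpNorm_smul {p : ℝ} (hp : 1 ≤ p) (s : ℂ) {f : Polytorus → ℂ} (hf : Continuous f) :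
    lpNorm p (s • f) = ‖s‖ * lpNorm p f := by
  have h1 : lpNorm p (s • f) = (eLpNorm (s • f) (ENNReal.ofReal p) muInf).toReal :=
    lpNorm_eq_toReal hp (by exact hf.const_smul s)
  rw [h1, lpNorm_eq_toReal hp hf, eLpNorm_const_smul]
  rw [ENNReal.toReal_mul, enorm_eq_nnnorm, ENNReal.coe_toReal, coe_nnnorm]

lemma lpNorm_pos {p : ℝ} (hp : 1 ≤ p) {f : Polytorus → ℂ} (hf : Continuous f) (h0 : f ≠ 0) :
    0 < lpNorm p f := by
  have hp0 : 0 < p := lt_of_lt_of_le one_pos hp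
  unfold _root_.lpNorm
  apply Real.rpow_pos_of_pos
  have hint : Integrable (fun z : Polytorus => ‖f z‖ ^ p) muInf :=
    Continuous.integrableM (hf.norm.rpow_const fun z => Or.inr hp0.le)
  rw [integral_pos_iff_support_of_nonneg
      (fun z => Real.rpow_nonneg (norm_nonneg _) _) hint]
  have hsupp : (Function.support fun z => ‖f z‖ ^ p) = Function.support f := by
    ext z
    simp only [Function.mem_support, ne_eq]
    rw [Real.rpow_eq_zero_iff_of_nonneg (norm_nonneg _)]
    simp [hp0.ne', norm_eq_zero]
  rw [hsupp]
  have hopen : IsOpen (Function.support f) := by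
    rw [Function.support_eq_preimage]
    exact (isClosed_singleton (x := (0:ℂ))).isOpen_compl.preimage hf
  exact hopen.measure_pos muInf (Function.support_nonempty_iff.mpr h0)

/-! ### The averaging operator -/

noncomputable def omK (K : ℕ) : Circle := Circle.exp (2 * Real.pi / K)

lemma omK_ne_zero (K : ℕ) : ((omK K : ℂ)) ≠ 0 := by
  intro h
  have := Circle.norm_coe (omK K)
  rw [h] at this
  simp at this

lemma omK_pow_K (K : ℕ) (hK : K ≠ 0) : ((omK K : ℂ)) ^ (K : ℕ) = 1 := by
  have : ((omK K : ℂ)) = Complex.exp (((2 * Real.pi / K : ℝ) : ℂ) * Complex.I) := Circle.coe_exp _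
  rw [this, ← Complex.exp_nat_mul]
  rw [show ((K : ℂ) * (((2 * Real.pi / K : ℝ) : ℂ) * Complex.I)) = 2 * Real.pi * Complex.I by
    have hKc : (K : ℂ) ≠ 0 := Nat.cast_ne_zero.2 hK
    push_cast
    field_simp]
  exact Complex.exp_two_pi_mul_I

lemma omK_zpow_ne_one (K : ℕ) (m : ℤ) (hm : m ≠ 0) (hmK : m.natAbs < K) :
    ((omK K : ℂ)) ^ m ≠ 1 := by
  have hK : K ≠ 0 := by omega
  have hcoe : ((omK K : ℂ)) = Complex.exp (((2 * Real.pi / K : ℝ) : ℂ) * Complex.I) :=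
    Circle.coe_exp _
  intro h
  rw [hcoe, ← Complex.exp_int_mul, Complex.exp_eq_one_iff] at h
  obtain ⟨n, hn⟩ := h
  have hKc : (K : ℂ) ≠ 0 := Nat.cast_ne_zero.2 hK
  have hπ : (Real.pi : ℂ) ≠ 0 := Complex.ofReal_ne_zero.2 Real.pi_ne_zero
  have hI : Complex.I ≠ 0 := Complex.I_ne_zero
  push_cast at hn
  have h1 : (((m : ℝ) * (2 * Real.pi / K) : ℝ) : ℂ) * Complex.I
      = (((n : ℝ) * (2 * Real.pi) : ℝ) : ℂ) * Complex.I := by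
    push_cast
    linear_combination hn
  have h2 : (m : ℝ) * (2 * Real.pi / K) = (n : ℝ) * (2 * Real.pi) := by
    have := mul_right_cancel₀ hI h1
    exact_mod_cast this
  have hKr : (K : ℝ) ≠ 0 := Nat.cast_ne_zero.2 hK
  have hmnR : (m : ℝ) = (n : ℝ) * K := by
    have hπr : Real.pi ≠ 0 := Real.pi_ne_zero
    field_simp at h2
    nlinarith [Real.pi_pos, h2]
  have hmnZ : m = n * (K : ℤ) := by exact_mod_cast hmnR
  rcases eq_or_ne n 0 with rfl | hn0
  · simp at hmnZ; exact hm hmnZ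
  · have h3 : m.natAbs = n.natAbs * K := by
      rw [hmnZ, Int.natAbs_mul, Int.natAbs_natCast]
    have h4 : 1 ≤ n.natAbs := Int.natAbs_pos.mpr hn0
    have h5 : K ≤ n.natAbs * K := Nat.le_mul_of_pos_left K h4
    omega

lemma sum_pow_omK (K : ℕ) (hK : 0 < K) (m : ℤ) (hmK : m.natAbs < K) :
    (∑ k ∈ Finset.range K, (((omK K : ℂ)) ^ m) ^ k) = if m = 0 then (K : ℂ) else 0 := by
  split_ifs with h
  · subst h; simp
  · rw [geom_sum_eq (omK_zpow_ne_one K m h hmK)]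
    have h1 : (((omK K : ℂ)) ^ m) ^ (K : ℕ) = 1 := by
      rw [← zpow_natCast (((omK K : ℂ)) ^ m) K, ← zpow_mul, mul_comm, zpow_mul,
        zpow_natCast, omK_pow_K K hK.ne', one_zpow]
    rw [h1, sub_self, zero_div]

lemma monomial_indicator (α : ℕ →₀ ℕ) (w : Circle) (s : Finset ℕ) :
    monomial α (fun j => if j ∈ s then w else 1) = (w : ℂ) ^ (∑ j ∈ s, α j) := by
  unfold monomial Finsupp.prod
  have h1 : ∀ j ∈ α.support, (((if j ∈ s then w else 1 : Circle) : ℂ)) ^ α j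
      = if j ∈ s then (w : ℂ) ^ α j else 1 := by
    intro j _; split_ifs <;> simp
  rw [Finset.prod_congr rfl h1, ← Finset.prod_filter, Finset.prod_pow_eq_pow_sum]
  congr 1
  refine Finset.sum_subset (fun j hj => (Finset.mem_filter.mp hj).2) ?_
  intro j hjs hj
  by_contra h
  exact hj (Finset.mem_filter.mpr ⟨Finsupp.mem_support_iff.mpr h, hjs⟩)

/-- The rotation-by-`r` permutation of `ℕ`, acting on `{0, ..., d-1}`. -/
def permD (d : ℕ) [NeZero d] (r : Fin d) : Equiv.Perm ℕ :=
  (Equiv.addLeft r).extendDomain Fin.equivSubtype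

lemma permD_apply_lt (d : ℕ) [NeZero d] (r : Fin d) (j : ℕ) (hj : j < d) :
    permD d r j = ((r + ⟨j, hj⟩ : Fin d) : ℕ) := by
  unfold permD
  rw [Equiv.Perm.extendDomain_apply_subtype _ Fin.equivSubtype hj]
  rfl

/-- The multiplier sequence. -/
noncomputable def cFact (d K M : ℕ) (k l : ℕ) : Polytorus :=
  (fun j => if j ∈ Finset.range d then (omK K) ^ k else 1) *
  (fun j => if j ∈ Finset.Ico d M then (omK K) ^ l else 1)

noncomputable def transMap (d K M : ℕ) [NeZero d] (k l : ℕ) (r : Fin d) :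
    Polytorus → Polytorus :=
  fun z => cFact d K M k l * (z ∘ (permD d r))

/-- The averaging operator. -/
noncomputable def avgF (d K M : ℕ) [NeZero d] (f : Polytorus → ℂ) : Polytorus → ℂ :=
  fun z => ((K * K * d : ℕ) : ℂ)⁻¹ * ∑ k ∈ Finset.range K, ∑ l ∈ Finset.range K, ∑ r : Fin d,
    (((omK K : ℂ)) ^ k)⁻¹ * f (transMap d K M k l r z)

lemma avgF_monomial (d K M : ℕ) [NeZero d] (hd : 1 ≤ d) (hK : 2 ≤ K) (hdM : d ≤ M)
    (α : ℕ →₀ ℕ) (hsupp : α.support ⊆ Finset.range M)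
    (hdeg : (∑ j ∈ Finset.range M, α j) < K) :
    avgF d K M (monomial α) = pairing (monomial α) (phiFn d) • phiFn d := by
  have hK0 : (0:ℕ) < K := by omega
  have hKc : ((K : ℕ) : ℂ) ≠ 0 := Nat.cast_ne_zero.2 (by omega)
  have hdc : ((d : ℕ) : ℂ) ≠ 0 := Nat.cast_ne_zero.2 (by omega)
  set ω : ℂ := ((omK K : ℂ)) with hω
  have hω0 : ω ≠ 0 := omK_ne_zero K
  set A := ∑ j ∈ Finset.range d, α j with hA
  set B := ∑ j ∈ Finset.Ico d M, α j with hB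
  have hAB : A + B = ∑ j ∈ Finset.range M, α j := by
    rw [hA, hB, Finset.range_eq_Ico, Finset.range_eq_Ico]
    exact Finset.sum_Ico_consecutive (⇑α) (Nat.zero_le d) hdM
  have hAK : A < K := by omega
  have hBK : B < K := by omega
  -- pointwise description of the triple sum
  have key : ∀ z : Polytorus,
      (∑ k ∈ Finset.range K, ∑ l ∈ Finset.range K, ∑ r : Fin d,
        (ω ^ k)⁻¹ * monomial α (transMap d K M k l r z))
      = ((if ((A:ℤ) - 1) = 0 then (K:ℂ) else 0) * ((if ((B:ℤ)) = 0 then (K:ℂ) else 0)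
          * (∑ r : Fin d, monomial α (z ∘ permD d r)))) := by
    intro z
    have hmon : ∀ (k l : ℕ) (r : Fin d), monomial α (transMap d K M k l r z)
        = (ω ^ k) ^ A * ((ω ^ l) ^ B * monomial α (z ∘ permD d r)) := by
      intro k l r
      rw [transMap, monomial_mul, cFact, monomial_mul, monomial_indicator, monomial_indicator]
      have c1 : ((omK K ^ k : Circle) : ℂ) = ω ^ k := by push_cast; rfl
      have c2 : ((omK K ^ l : Circle) : ℂ) = ω ^ l := by push_cast; rfl
      rw [c1, c2, ← hA, ← hB, mul_assoc]
    have pzc : ∀ (a : ℂ) (k : ℕ) (m : ℤ), (a ^ k) ^ m = (a ^ m) ^ k := by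
      intro a k m
      rw [← zpow_natCast a k, ← zpow_mul, mul_comm, zpow_mul, zpow_natCast]
    have hwx : ∀ k : ℕ, (ω ^ k)⁻¹ * (ω ^ k) ^ A = (ω ^ ((A:ℤ) - 1)) ^ k := by
      intro k
      have h1 : (ω ^ k)⁻¹ * (ω ^ k) ^ A = (ω ^ k) ^ ((A:ℤ) - 1) := by
        rw [zpow_sub₀ (pow_ne_zero _ hω0), zpow_natCast, zpow_one]
        ring
      rw [h1, pzc]
    have hy : ∀ l : ℕ, (ω ^ l) ^ B = (ω ^ ((B:ℤ))) ^ l := by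
      intro l
      rw [zpow_natCast, ← pow_mul, ← pow_mul, mul_comm]
    set SH := ∑ r : Fin d, monomial α (z ∘ permD d r) with hSH
    have e1 : ∀ k ∈ Finset.range K, ∀ l ∈ Finset.range K,
        (∑ r : Fin d, (ω ^ k)⁻¹ * monomial α (transMap d K M k l r z))
        = (ω ^ ((A:ℤ) - 1)) ^ k * ((ω ^ ((B:ℤ))) ^ l * SH) := by
      intro k _ l _
      calc (∑ r : Fin d, (ω ^ k)⁻¹ * monomial α (transMap d K M k l r z))
          = ∑ r : Fin d, (ω ^ ((A:ℤ) - 1)) ^ k * ((ω ^ ((B:ℤ))) ^ l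
              * monomial α (z ∘ permD d r)) := by
            refine Finset.sum_congr rfl fun r _ => ?_
            rw [hmon, ← hwx k, ← hy l]
            ring
        _ = (ω ^ ((A:ℤ) - 1)) ^ k * ((ω ^ ((B:ℤ))) ^ l * SH) := by
            rw [← Finset.mul_sum, ← Finset.mul_sum]
    have e2 : ∀ k ∈ Finset.range K,
        (∑ l ∈ Finset.range K, ∑ r : Fin d, (ω ^ k)⁻¹ * monomial α (transMap d K M k l r z))
        = (ω ^ ((A:ℤ) - 1)) ^ k * ((∑ l ∈ Finset.range K, (ω ^ ((B:ℤ))) ^ l) * SH) := by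
      intro k hk
      rw [Finset.sum_congr rfl (e1 k hk)]
      rw [← Finset.mul_sum]
      congr 1
      rw [← Finset.sum_mul]
    rw [Finset.sum_congr rfl e2, ← Finset.sum_mul]
    rw [sum_pow_omK K hK0 ((A:ℤ) - 1) (by omega), sum_pow_omK K hK0 ((B:ℤ)) (by omega)]
  by_cases hcase : A = 1 ∧ B = 0
  · -- main case : α is e_{j₀} for some j₀ < d
    obtain ⟨hA1, hB0⟩ := hcase
    obtain ⟨j₀, hj₀mem, hj₀ne⟩ := Finset.exists_ne_zero_of_sum_ne_zero
      (by rw [← hA, hA1]; exact one_ne_zero)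
    have hj₀d : j₀ < d := Finset.mem_range.mp hj₀mem
    have hαj₀le : α j₀ ≤ 1 := by
      rw [← hA1, hA]
      exact Finset.single_le_sum (fun i _ => Nat.zero_le _) hj₀mem
    have hαj₀ : α j₀ = 1 := by omega
    have herase : ∑ i ∈ (Finset.range d).erase j₀, α i = 0 := by
      have h := Finset.sum_erase_add (Finset.range d) α hj₀mem
      omega
    have hα : α = Finsupp.single j₀ 1 := by
      ext i
      rcases eq_or_ne i j₀ with rfl | hne
      · rw [hαj₀, Finsupp.single_eq_same]
      · rw [Finsupp.single_eq_of_ne' (Ne.symm hne)]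
        by_cases hi1 : i < d
        · exact (Finset.sum_eq_zero_iff.mp herase) i
            (Finset.mem_erase.mpr ⟨hne, Finset.mem_range.mpr hi1⟩)
        · by_cases hi2 : i < M
          · exact (Finset.sum_eq_zero_iff.mp (by rw [← hB]; exact hB0)) i
              (Finset.mem_Ico.mpr ⟨by omega, hi2⟩)
          · by_contra h
            have := hsupp (Finsupp.mem_support_iff.mpr h)
            rw [Finset.mem_range] at this
            omega
    funext z
    rw [avgF, key]
    have hA1' : ((A:ℤ) - 1) = 0 := by rw [hA1]; ring
    have hB0' : ((B:ℤ)) = 0 := by rw [hB0]; ring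
    rw [if_pos hA1', if_pos hB0']
    have hsum : (∑ r : Fin d, monomial α (z ∘ permD d r)) = ∑ j ∈ Finset.range d, (z j : ℂ) := by
      rw [hα]
      have h1 : ∀ r : Fin d, monomial (Finsupp.single j₀ 1) (z ∘ permD d r)
          = (z ((r + (⟨j₀, hj₀d⟩ : Fin d) : Fin d) : ℕ) : ℂ) := by
        intro r
        rw [monomial_single]
        simp only [Function.comp_apply]
        rw [permD_apply_lt d r j₀ hj₀d]
      rw [Finset.sum_congr rfl fun r _ => h1 r]
      rw [show (∑ r : Fin d, (z ((r + (⟨j₀, hj₀d⟩ : Fin d) : Fin d) : ℕ) : ℂ))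
          = ∑ i : Fin d, (z (i : ℕ) : ℂ) from
        Equiv.sum_comp (Equiv.addRight (⟨j₀, hj₀d⟩ : Fin d)) (fun i : Fin d => (z (i : ℕ) : ℂ))]
      exact Fin.sum_univ_eq_sum_range (fun i => (z i : ℂ)) d
    rw [hsum, hα, Pi.smul_apply, pairing_monomial_single_phiFn d j₀ hj₀d, phiFn]
    rw [smul_eq_mul]
    have hsd0 := sqrt_d_ne d hd
    have hKKd : ((K * K * d : ℕ) : ℂ) = (K:ℂ) * (K:ℂ) * (d:ℂ) := by push_cast; ring
    rw [hKKd, div_eq_mul_inv, ← sqrt_d_sq d hd]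
    field_simp
  · -- degenerate case : everything is 0
    have hzero : ((if ((A:ℤ) - 1) = 0 then (K:ℂ) else 0) = 0) ∨ ((if ((B:ℤ)) = 0 then (K:ℂ) else 0) = 0) := by
      by_cases h1 : A = 1
      · refine Or.inr ?_
        rw [if_neg ?_]
        intro h2
        exact hcase ⟨h1, by exact_mod_cast h2⟩
      · refine Or.inl ?_
        rw [if_neg ?_]
        intro h2
        exact h1 (by omega)
    have hpair : pairing (monomial α) (phiFn d) = 0 := by
      rw [pairing_phiFn (monomial_continuous α)]
      have hterm : ∀ j ∈ Finset.range d, pairing (monomial α) (monomial (Finsupp.single j 1)) = 0 := by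
        intro j hj
        rw [pairing_monomial, if_neg]
        intro h
        apply hcase
        subst h
        constructor
        · rw [hA]
          rw [Finset.sum_congr rfl (fun i _ => Finsupp.single_apply)]
          rw [Finset.sum_ite_eq (Finset.range d) j (fun _ => 1)]
          simp [hj]
        · rw [hB]
          refine Finset.sum_eq_zero fun i hi => ?_
          rw [Finsupp.single_apply, if_neg]
          rw [Finset.mem_range] at hj
          rw [Finset.mem_Ico] at hi
          omega
      rw [Finset.sum_congr rfl hterm]
      simp
    funext z
    rw [avgF, key, hpair]
    rcases hzero with h | h <;> rw [h] <;> simp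

lemma avgF_sum (d K M : ℕ) [NeZero d] {ι : Type*} (s : Finset ι) (c : ι → ℂ)
    (F : ι → Polytorus → ℂ) :
    avgF d K M (fun w => ∑ i ∈ s, c i * F i w)
      = fun z => ∑ i ∈ s, c i * avgF d K M (F i) z := by
  funext z
  unfold avgF
  have step :
      (∑ k ∈ Finset.range K, ∑ l ∈ Finset.range K, ∑ r : Fin d,
        (((omK K : ℂ)) ^ k)⁻¹ * ∑ i ∈ s, c i * F i (transMap d K M k l r z))
      = ∑ i ∈ s, ∑ k ∈ Finset.range K, ∑ l ∈ Finset.range K, ∑ r : Fin d,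
        (((omK K : ℂ)) ^ k)⁻¹ * (c i * F i (transMap d K M k l r z)) := by
    calc (∑ k ∈ Finset.range K, ∑ l ∈ Finset.range K, ∑ r : Fin d,
        (((omK K : ℂ)) ^ k)⁻¹ * ∑ i ∈ s, c i * F i (transMap d K M k l r z))
        = ∑ k ∈ Finset.range K, ∑ l ∈ Finset.range K, ∑ i ∈ s, ∑ r : Fin d,
            (((omK K : ℂ)) ^ k)⁻¹ * (c i * F i (transMap d K M k l r z)) := by
          refine Finset.sum_congr rfl fun k _ => Finset.sum_congr rfl fun l _ => ?_
          rw [Finset.sum_congr rfl (fun r (_ : r ∈ Finset.univ) => Finset.mul_sum s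
            (fun i => c i * F i (transMap d K M k l r z)) ((((omK K : ℂ)) ^ k)⁻¹))]
          exact Finset.sum_comm
      _ = ∑ k ∈ Finset.range K, ∑ i ∈ s, ∑ l ∈ Finset.range K, ∑ r : Fin d,
            (((omK K : ℂ)) ^ k)⁻¹ * (c i * F i (transMap d K M k l r z)) :=
          Finset.sum_congr rfl fun k _ => Finset.sum_comm
      _ = ∑ i ∈ s, ∑ k ∈ Finset.range K, ∑ l ∈ Finset.range K, ∑ r : Fin d,
            (((omK K : ℂ)) ^ k)⁻¹ * (c i * F i (transMap d K M k l r z)) :=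
          Finset.sum_comm
  rw [step, Finset.mul_sum]
  refine Finset.sum_congr rfl fun i _ => ?_
  have hS : (∑ k ∈ Finset.range K, ∑ l ∈ Finset.range K, ∑ r : Fin d,
        (((omK K : ℂ)) ^ k)⁻¹ * (c i * F i (transMap d K M k l r z)))
      = c i * (∑ k ∈ Finset.range K, ∑ l ∈ Finset.range K, ∑ r : Fin d,
        (((omK K : ℂ)) ^ k)⁻¹ * F i (transMap d K M k l r z)) := by
    rw [Finset.mul_sum]
    refine Finset.sum_congr rfl fun k _ => ?_
    rw [Finset.mul_sum]
    refine Finset.sum_congr rfl fun l _ => ?_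
    rw [Finset.mul_sum]
    refine Finset.sum_congr rfl fun r _ => ?_
    ring
  rw [hS]
  ring

lemma avgF_poly (d K M : ℕ) [NeZero d] (hd : 1 ≤ d) (hK : 2 ≤ K) (hdM : d ≤ M)
    (c : (ℕ →₀ ℕ) →₀ ℂ)
    (hs : ∀ α ∈ c.support, α.support ⊆ Finset.range M ∧ (∑ j ∈ Finset.range M, α j) < K) :
    avgF d K M (c.sum fun α a => a • monomial α)
      = pairing (c.sum fun α a => a • monomial α) (phiFn d) • phiFn d := by
  have hfun : (c.sum fun α a => a • monomial α)
      = fun w => ∑ α ∈ c.support, c α * monomial α w := by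
    funext w
    rw [Finsupp.sum, Finset.sum_apply]
    exact Finset.sum_congr rfl fun α _ => rfl
  rw [hfun, avgF_sum]
  have hpair : pairing (fun w => ∑ α ∈ c.support, c α * monomial α w) (phiFn d)
      = ∑ α ∈ c.support, c α * pairing (monomial α) (phiFn d) := by
    have := pairing_sum c.support (fun α => c α) (fun α => monomial α)
      (fun α _ => monomial_continuous α) (continuous_phiFn d)
    rw [← this]
    congr 1
    funext w
    rw [Finset.sum_apply]
    exact Finset.sum_congr rfl fun α _ => rfl
  rw [hpair]
  funext z
  rw [Finset.sum_congr rfl (fun α hα => by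
    rw [avgF_monomial d K M hd hK hdM α (hs α hα).1 (hs α hα).2])]
  simp only [Pi.smul_apply, smul_eq_mul, Finset.sum_mul]
  exact Finset.sum_congr rfl fun α _ => by ring

lemma continuous_transMap (d K M : ℕ) [NeZero d] (k l : ℕ) (r : Fin d) :
    Continuous (transMap d K M k l r) := by
  unfold transMap
  exact continuous_const.mul (continuous_permMap (permD d r))

lemma measurePreserving_transMap (d K M : ℕ) [NeZero d] (k l : ℕ) (r : Fin d) :
    MeasurePreserving (transMap d K M k l r) muInf muInf :=
  (measurePreserving_mul_left muInf (cFact d K M k l)).comp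
    (measurePreserving_permMap (permD d r))

lemma continuous_finset_sum_fun {ι : Type*} (s : Finset ι) (F : ι → Polytorus → ℂ)
    (h : ∀ i ∈ s, Continuous (F i)) : Continuous (∑ i ∈ s, F i) := by
  have h1 : (∑ i ∈ s, F i) = fun z => ∑ i ∈ s, F i z := by
    funext z; rw [Finset.sum_apply]
  rw [h1]
  exact continuous_finset_sum _ h

lemma eLpNorm_avgF_le (d K M : ℕ) [NeZero d] (hK : 1 ≤ K) (q : ℝ≥0∞) (hq : 1 ≤ q)
    {f : Polytorus → ℂ} (hf : Continuous f) :
    eLpNorm (avgF d K M f) q muInf ≤ eLpNorm f q muInf := by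
  have hd0 : 0 < d := Nat.pos_of_ne_zero (NeZero.ne d)
  have hN0 : (K * K * d : ℕ) ≠ 0 := by positivity
  have hrepr : avgF d K M f = (((K * K * d : ℕ) : ℂ))⁻¹ • ∑ k ∈ Finset.range K,
      ∑ l ∈ Finset.range K, ∑ r : Fin d,
      ((((omK K : ℂ)) ^ k)⁻¹ • (f ∘ transMap d K M k l r)) := by
    funext z
    simp only [avgF, Pi.smul_apply, smul_eq_mul, Finset.sum_apply, Function.comp_apply]
  have hg_cont : ∀ (k l : ℕ) (r : Fin d),
      Continuous ((((omK K : ℂ)) ^ k)⁻¹ • (f ∘ transMap d K M k l r)) :=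
    fun k l r => by exact (hf.comp (continuous_transMap d K M k l r)).const_smul ((((omK K : ℂ)) ^ k)⁻¹)
  have hg_norm : ∀ (k l : ℕ) (r : Fin d),
      eLpNorm ((((omK K : ℂ)) ^ k)⁻¹ • (f ∘ transMap d K M k l r)) q muInf
        = eLpNorm f q muInf := by
    intro k l r
    rw [eLpNorm_const_smul]
    have h1 : ‖(((omK K : ℂ)) ^ k)⁻¹‖₊ = 1 := by
      have h2 : ‖(((omK K : ℂ)) ^ k)⁻¹‖ = 1 := by
        rw [norm_inv, norm_pow, Circle.norm_coe]
        simp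
      exact NNReal.coe_injective (by simpa using h2)
    rw [enorm_eq_nnnorm, h1, ENNReal.coe_one, one_mul]
    exact eLpNorm_comp_measurePreserving hf.aestronglyMeasurable
      (measurePreserving_transMap d K M k l r)
  have hsum3 : ∀ (k l : ℕ),
      eLpNorm (∑ r : Fin d, (((omK K : ℂ)) ^ k)⁻¹ • (f ∘ transMap d K M k l r)) q muInf
        ≤ (d : ℝ≥0∞) * eLpNorm f q muInf := by
    intro k l
    refine (eLpNorm_sum_le (fun r _ => (hg_cont k l r).aestronglyMeasurable) hq).trans ?_
    rw [Finset.sum_congr rfl (fun r _ => hg_norm k l r), Finset.sum_const, Finset.card_univ,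
      Fintype.card_fin, nsmul_eq_mul]
  have hsum2 : ∀ (k : ℕ),
      eLpNorm (∑ l ∈ Finset.range K, ∑ r : Fin d,
        (((omK K : ℂ)) ^ k)⁻¹ • (f ∘ transMap d K M k l r)) q muInf
        ≤ (K : ℝ≥0∞) * ((d : ℝ≥0∞) * eLpNorm f q muInf) := by
    intro k
    refine (eLpNorm_sum_le (fun l _ => (continuous_finset_sum_fun _ _
      (fun r _ => hg_cont k l r)).aestronglyMeasurable) hq).trans ?_
    refine (Finset.sum_le_sum fun l _ => hsum3 k l).trans ?_
    rw [Finset.sum_const, Finset.card_range, nsmul_eq_mul]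
  have hsum1 : eLpNorm (∑ k ∈ Finset.range K, ∑ l ∈ Finset.range K, ∑ r : Fin d,
        (((omK K : ℂ)) ^ k)⁻¹ • (f ∘ transMap d K M k l r)) q muInf
      ≤ (K : ℝ≥0∞) * ((K : ℝ≥0∞) * ((d : ℝ≥0∞) * eLpNorm f q muInf)) := by
    refine (eLpNorm_sum_le (fun k _ => (continuous_finset_sum_fun _ _ (fun l _ =>
      continuous_finset_sum_fun _ _ (fun r _ => hg_cont k l r))).aestronglyMeasurable) hq).trans ?_
    refine (Finset.sum_le_sum fun k _ => hsum2 k).trans ?_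
    rw [Finset.sum_const, Finset.card_range, nsmul_eq_mul]
  rw [hrepr, eLpNorm_const_smul]
  have hnn : (‖(((K * K * d : ℕ) : ℂ))⁻¹‖₊ : ℝ≥0∞) = (((K * K * d : ℕ) : ℝ≥0∞))⁻¹ := by
    rw [nnnorm_inv, ENNReal.coe_inv (by simpa using hN0)]
    congr 1
    simp
  rw [enorm_eq_nnnorm, hnn]
  refine le_trans (mul_le_mul_right hsum1 _) ?_
  have hfin : ((K * K * d : ℕ) : ℝ≥0∞) ≠ ⊤ := ENNReal.natCast_ne_top _
  have hne : ((K * K * d : ℕ) : ℝ≥0∞) ≠ 0 := by simpa using hN0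
  have harith : (((K * K * d : ℕ) : ℝ≥0∞))⁻¹ * ((K : ℝ≥0∞) * ((K : ℝ≥0∞)
      * ((d : ℝ≥0∞) * eLpNorm f q muInf))) = eLpNorm f q muInf := by
    calc (((K * K * d : ℕ) : ℝ≥0∞))⁻¹ * ((K : ℝ≥0∞) * ((K : ℝ≥0∞)
        * ((d : ℝ≥0∞) * eLpNorm f q muInf)))
        = (((K * K * d : ℕ) : ℝ≥0∞))⁻¹ * (((K * K * d : ℕ) : ℝ≥0∞) * eLpNorm f q muInf) := by
          congr 1
          push_cast
          ring
      _ = eLpNorm f q muInf := by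
          rw [← mul_assoc, ENNReal.inv_mul_cancel hne hfin, one_mul]
  rw [harith]

lemma isAnalyticPoly_continuous {f : Polytorus → ℂ} (hf : IsAnalyticPoly f) : Continuous f := by
  obtain ⟨c, rfl⟩ := Finsupp.mem_span_range_iff_exists_finsupp.mp hf
  have hfun : (c.sum fun α a => a • monomial α)
      = fun w => ∑ α ∈ c.support, c α * monomial α w := by
    funext w
    rw [Finsupp.sum, Finset.sum_apply]
    exact Finset.sum_congr rfl fun α _ => rfl
  rw [hfun]
  exact continuous_finset_sum _ fun α _ => (continuous_const.mul (monomial_continuous α))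

lemma key_ineq (p : ℝ) (hp : 1 ≤ p) (d : ℕ) (hd : 1 ≤ d) {f : Polytorus → ℂ}
    (hf : IsAnalyticPoly f) :
    ‖pairing f (phiFn d)‖ * lpNorm p (phiFn d) ≤ lpNorm p f := by
  haveI : NeZero d := ⟨by omega⟩
  obtain ⟨c, hc⟩ := Finsupp.mem_span_range_iff_exists_finsupp.mp hf
  set M : ℕ := d + (c.support.sup fun α => α.support.sup id) + 1 with hM
  set K : ℕ := 2 + (c.support.sup fun α => ∑ j ∈ Finset.range M, α j) with hKdef
  have hdM : d ≤ M := by omega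
  have hK2 : 2 ≤ K := by omega
  have hs : ∀ α ∈ c.support, α.support ⊆ Finset.range M
      ∧ (∑ j ∈ Finset.range M, α j) < K := by
    intro α hα
    constructor
    · intro j hj
      rw [Finset.mem_range]
      have h1 : j ≤ α.support.sup id := Finset.le_sup (f := id) hj
      have h2 : α.support.sup id ≤ c.support.sup (fun α => α.support.sup id) :=
        Finset.le_sup (f := fun α => α.support.sup id) hα
      omega
    · have h3 : (∑ j ∈ Finset.range M, α j)
          ≤ c.support.sup (fun α => ∑ j ∈ Finset.range M, α j) :=
        Finset.le_sup (f := fun α => ∑ j ∈ Finset.range M, α j) hα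
      omega
  have havg := avgF_poly d K M hd hK2 hdM c hs
  rw [hc] at havg
  have hfc : Continuous f := isAnalyticPoly_continuous hf
  have hφc := continuous_phiFn d
  have hgc : Continuous (pairing f (phiFn d) • phiFn d) := by
    exact hφc.const_smul (pairing f (phiFn d))
  have h1 : lpNorm p (pairing f (phiFn d) • phiFn d) ≤ lpNorm p f := by
    rw [← havg, lpNorm_eq_toReal hp (havg ▸ hgc), lpNorm_eq_toReal hp hfc]
    exact ENNReal.toReal_mono (memLp_of_continuous hfc _).eLpNorm_ne_top
      (eLpNorm_avgF_le d K M (by omega) _ (by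
        rw [ENNReal.one_le_ofReal]; linarith) hfc)
  rwa [lpNorm_smul hp _ hφc] at h1

end Aux

/-- `‖φ_d‖_{(H^p)^*} = ‖φ_d‖_{L^p(𝕋^∞)}⁻¹`. -/
theorem dual_norm_phi_eq_inv (p : ℝ) (hp : 1 ≤ p) (d : ℕ) (hd : 1 ≤ d) :
    dualNorm p (phiFn d) = (lpNorm p (phiFn d))⁻¹ := by
  have hφc := continuous_phiFn d
  have hφ0 : phiFn d ≠ 0 := by
    intro h
    have h1 := congrFun h (fun _ => (1 : Circle))
    simp only [phiFn, Pi.zero_apply, Circle.coe_one, Finset.sum_const, Finset.card_range,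
      nsmul_eq_mul, mul_one, div_eq_zero_iff] at h1
    rcases h1 with h1 | h1
    · rw [Nat.cast_eq_zero] at h1; omega
    · exact sqrt_d_ne d hd h1
  have hφpos : 0 < lpNorm p (phiFn d) := lpNorm_pos hp hφc hφ0
  have hφpoly : IsAnalyticPoly (phiFn d) := by
    rw [IsAnalyticPoly, phiFn_eq_sum d]
    exact Submodule.sum_mem _ fun j _ =>
      Submodule.smul_mem _ _ (Submodule.subset_span ⟨_, rfl⟩)
  have hub : ∀ t ∈ {t : ℝ | ∃ f : Polytorus → ℂ, IsAnalyticPoly f ∧ f ≠ 0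
      ∧ t = ‖pairing f (phiFn d)‖ / lpNorm p f}, t ≤ (lpNorm p (phiFn d))⁻¹ := by
    rintro t ⟨f, hfa, hf0, rfl⟩
    have hfc := isAnalyticPoly_continuous hfa
    have hfpos : 0 < lpNorm p f := lpNorm_pos hp hfc hf0
    have hkey := key_ineq p hp d hd hfa
    rw [div_le_iff₀ hfpos, inv_mul_eq_div, le_div_iff₀ hφpos]
    exact hkey
  have hmem : (lpNorm p (phiFn d))⁻¹ ∈ {t : ℝ | ∃ f : Polytorus → ℂ, IsAnalyticPoly f ∧ f ≠ 0
      ∧ t = ‖pairing f (phiFn d)‖ / lpNorm p f} := by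
    refine ⟨phiFn d, hφpoly, hφ0, ?_⟩
    rw [pairing_phiFn_self d hd, norm_one, one_div]
  exact le_antisymm (csSup_le ⟨_, hmem⟩ hub) (le_csSup ⟨_, hub⟩ hmem)
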